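/- Let F be a positive smooth function on U × (ℝⁿ∖{0}), where U ⊆ ℝⁿ is open, which is positively 1-homogeneous in y: F(x,λy) = λF(x,y) for all λ > 0. Then F satisfies the Rapcsák equation ∂²F/∂x^k∂y^l · y^k = ∂F/∂x^l for all l and all (x,y) with y ≠ 0 if and only if F satisfies the Hamel equation ∂²F/∂x^k∂y^l = ∂²F/∂x^l∂y^k for all k, l and all (x,y) with y ≠ 0. -/

import Mathlib

open scoped BigOperators
open Matrix

set_option maxHeartbeats 1000000

noncomputable section

/-- Partial derivative of `f` in the `i`-th coordinate direction at `v`. -/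
def pd {n : ℕ} (f : (Fin n → ℝ) → ℝ) (i : Fin n) (v : Fin n → ℝ) : ℝ :=
  fderiv ℝ f v (Pi.single i 1)

section RapcsakAux

open ContinuousLinearMap

variable {n : ℕ}

private lemma sum_smul_single' (y : Fin n → ℝ) :
    ∑ k, y k • (Pi.single k (1:ℝ) : Fin n → ℝ) = y := by
  have h : ∀ k : Fin n, y k • (Pi.single k (1:ℝ) : Fin n → ℝ) = Pi.single k (y k) := by
    intro k
    rw [← Pi.single_smul]
    simp
  simp_rw [h]
  exact Finset.univ_sum_single y

private lemma pair_fst_sum (y : Fin n → ℝ) :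
    ((y, (0 : Fin n → ℝ)) : (Fin n → ℝ) × (Fin n → ℝ))
      = ∑ k, y k • (((Pi.single k (1:ℝ) : Fin n → ℝ), (0 : Fin n → ℝ))) := by
  rw [Prod.ext_iff]
  constructor
  · rw [Prod.fst_sum]
    simp [sum_smul_single' y]
  · rw [Prod.snd_sum]
    simp

private lemma pair_snd_sum (y : Fin n → ℝ) :
    (((0 : Fin n → ℝ), y) : (Fin n → ℝ) × (Fin n → ℝ))
      = ∑ k, y k • (((0 : Fin n → ℝ), (Pi.single k (1:ℝ) : Fin n → ℝ))) := by
  rw [Prod.ext_iff]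
  constructor
  · rw [Prod.fst_sum]
    simp
  · rw [Prod.snd_sum]
    simp [sum_smul_single' y]

private lemma clm_fst_sum (L : ((Fin n → ℝ) × (Fin n → ℝ)) →L[ℝ] ℝ) (y : Fin n → ℝ) :
    L (y, 0) = ∑ k, y k * L (Pi.single k 1, 0) := by
  conv_lhs => rw [pair_fst_sum y]
  rw [map_sum]
  refine Finset.sum_congr rfl fun k _ => ?_
  rw [L.map_smul]
  simp [smul_eq_mul]

private lemma clm_snd_sum (L : ((Fin n → ℝ) × (Fin n → ℝ)) →L[ℝ] ℝ) (y : Fin n → ℝ) :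
    L (0, y) = ∑ k, y k * L (0, Pi.single k 1) := by
  conv_lhs => rw [pair_snd_sum y]
  rw [map_sum]
  refine Finset.sum_congr rfl fun k _ => ?_
  rw [L.map_smul]
  simp [smul_eq_mul]

end RapcsakAux

/-- for a positive, smooth, positively 1-homogeneous `F`, the
Rapcsák equation `∂²F/∂x^k∂y^l · y^k = ∂F/∂x^l` is equivalent to the Hamel
equation `∂²F/∂x^k∂y^l = ∂²F/∂x^l∂y^k`. -/
theorem rapcsak_iff_hamel
    (n : ℕ) (hn : 2 ≤ n)
    (U : Set (Fin n → ℝ)) (hU : IsOpen U)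
    (F : (Fin n → ℝ) → (Fin n → ℝ) → ℝ)
    (hFsm : ContDiffOn ℝ (⊤:ℕ∞) (fun p : (Fin n → ℝ) × (Fin n → ℝ) => F p.1 p.2)
      (U ×ˢ {y : Fin n → ℝ | y ≠ 0}))
    (hFpos : ∀ x ∈ U, ∀ y : Fin n → ℝ, y ≠ 0 → 0 < F x y)
    (hFhom : ∀ x ∈ U, ∀ y : Fin n → ℝ, ∀ t : ℝ, 0 < t → F x (t • y) = t * F x y) :
    (∀ x ∈ U, ∀ y : Fin n → ℝ, y ≠ 0 → ∀ l,
        (∑ k, pd (fun x' => pd (F x') l y) k x * y k) = pd (fun x' => F x' y) l x)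
    ↔ (∀ x ∈ U, ∀ y : Fin n → ℝ, y ≠ 0 → ∀ k l,
        pd (fun x' => pd (F x') l y) k x = pd (fun x' => pd (F x') k y) l x) := by
  classical
  set Fh : (Fin n → ℝ) × (Fin n → ℝ) → ℝ := fun p => F p.1 p.2 with hFhdef
  set Ω : Set ((Fin n → ℝ) × (Fin n → ℝ)) := U ×ˢ {y : Fin n → ℝ | y ≠ 0} with hΩdef
  have hΩo : IsOpen Ω := hU.prod isOpen_ne
  set g := fderiv ℝ Fh with hgdef
  set H := fderiv ℝ g with hHdef
  set T := fderiv ℝ H with hTdef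
  have hmem : ∀ x ∈ U, ∀ y : Fin n → ℝ, y ≠ 0 → (((x, y) : (Fin n → ℝ) × (Fin n → ℝ)) ∈ Ω) :=
    fun x hx y hy => ⟨hx, hy⟩
  have htop1 : ((⊤:ℕ∞) : WithTop ℕ∞) + 1 ≤ ((⊤:ℕ∞) : WithTop ℕ∞) := by decide
  have hone : (1 : WithTop ℕ∞) ≤ ((⊤:ℕ∞) : WithTop ℕ∞) := by decide
  have htwo : (2 : WithTop ℕ∞) ≤ ((⊤:ℕ∞) : WithTop ℕ∞) := by decide
  have hsm : ∀ p ∈ Ω, ContDiffAt ℝ ((⊤:ℕ∞) : WithTop ℕ∞) Fh p :=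
    fun p hp => hFsm.contDiffAt (hΩo.mem_nhds hp)
  have hgsm : ∀ p ∈ Ω, ContDiffAt ℝ ((⊤:ℕ∞) : WithTop ℕ∞) g p :=
    fun p hp => (hsm p hp).fderiv_right htop1
  have hHsm : ∀ p ∈ Ω, ContDiffAt ℝ ((⊤:ℕ∞) : WithTop ℕ∞) H p :=
    fun p hp => (hgsm p hp).fderiv_right htop1
  have hdF : ∀ p ∈ Ω, DifferentiableAt ℝ Fh p := fun p hp => (hsm p hp).differentiableAt (by simp)
  have hdg : ∀ p ∈ Ω, DifferentiableAt ℝ g p := fun p hp => (hgsm p hp).differentiableAt (by simp)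
  have hdH : ∀ p ∈ Ω, DifferentiableAt ℝ H p := fun p hp => (hHsm p hp).differentiableAt (by simp)
  -- translation lemmas
  have hA1 : ∀ x ∈ U, ∀ y : Fin n → ℝ, y ≠ 0 → ∀ l : Fin n,
      pd (fun x' => F x' y) l x = g (x, y) (Pi.single l 1, 0) := by
    intro x hx y hy l
    have h1 : HasFDerivAt (fun x' : Fin n → ℝ => ((x', y) : (Fin n → ℝ) × (Fin n → ℝ)))
        ((ContinuousLinearMap.id ℝ (Fin n → ℝ)).prod 0) x :=
      (hasFDerivAt_id x).prodMk (hasFDerivAt_const y x)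
    have h2 : HasFDerivAt (fun x' => F x' y)
        ((g (x, y)).comp ((ContinuousLinearMap.id ℝ (Fin n → ℝ)).prod 0)) x :=
      by have := (hdF _ (hmem x hx y hy)).hasFDerivAt.comp x h1; exact this
    simp only [pd]
    rw [h2.fderiv]
    simp
  have hA2 : ∀ x ∈ U, ∀ y : Fin n → ℝ, y ≠ 0 → ∀ l : Fin n,
      pd (F x) l y = g (x, y) (0, Pi.single l 1) := by
    intro x hx y hy l
    have h1 : HasFDerivAt (fun y' : Fin n → ℝ => ((x, y') : (Fin n → ℝ) × (Fin n → ℝ)))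
        ((0 : (Fin n → ℝ) →L[ℝ] (Fin n → ℝ)).prod (ContinuousLinearMap.id ℝ (Fin n → ℝ))) y :=
      (hasFDerivAt_const x y).prodMk (hasFDerivAt_id y)
    have h2 : HasFDerivAt (F x)
        ((g (x, y)).comp
          ((0 : (Fin n → ℝ) →L[ℝ] (Fin n → ℝ)).prod (ContinuousLinearMap.id ℝ (Fin n → ℝ)))) y :=
      (hdF _ (hmem x hx y hy)).hasFDerivAt.comp y h1
    simp only [pd]
    rw [h2.fderiv]
    simp
  have hA3 : ∀ x ∈ U, ∀ y : Fin n → ℝ, y ≠ 0 → ∀ k l : Fin n,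
      pd (fun x' => pd (F x') l y) k x
        = H (x, y) (Pi.single k 1, 0) (0, Pi.single l 1) := by
    intro x hx y hy k l
    have hev : (fun x' => pd (F x') l y)
        =ᶠ[nhds x] (fun x' => g (x', y) ((0 : Fin n → ℝ), Pi.single l 1)) := by
      filter_upwards [hU.mem_nhds hx] with x' hx'
      exact hA2 x' hx' y hy l
    have heq : fderiv ℝ (fun x' => pd (F x') l y) x
        = fderiv ℝ (fun x' => g (x', y) ((0 : Fin n → ℝ), Pi.single l 1)) x := hev.fderiv_eq
    have h1 : HasFDerivAt (fun x' : Fin n → ℝ => ((x', y) : (Fin n → ℝ) × (Fin n → ℝ)))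
        ((ContinuousLinearMap.id ℝ (Fin n → ℝ)).prod 0) x :=
      (hasFDerivAt_id x).prodMk (hasFDerivAt_const y x)
    have h2 : HasFDerivAt (fun x' : Fin n → ℝ => g (x', y))
        ((H (x, y)).comp ((ContinuousLinearMap.id ℝ (Fin n → ℝ)).prod 0)) x :=
      (hdg _ (hmem x hx y hy)).hasFDerivAt.comp x h1
    have h3 : HasFDerivAt (fun x' : Fin n → ℝ => g (x', y) ((0 : Fin n → ℝ), Pi.single l 1))
        ((ContinuousLinearMap.apply ℝ ℝ ((0 : Fin n → ℝ), Pi.single l 1)).comp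
          ((H (x, y)).comp ((ContinuousLinearMap.id ℝ (Fin n → ℝ)).prod 0))) x := by
      exact (ContinuousLinearMap.apply ℝ ℝ (((0 : Fin n → ℝ), Pi.single l 1) : (Fin n → ℝ) × (Fin n → ℝ))).hasFDerivAt.comp x h2
    have hpd : pd (fun x' => pd (F x') l y) k x
        = fderiv ℝ (fun x' => pd (F x') l y) x (Pi.single k 1) := rfl
    rw [hpd, heq, h3.fderiv]
    simp
  -- Euler identity
  have hEuler : ∀ p ∈ Ω, g p ((0 : Fin n → ℝ), p.2) = Fh p := by
    rintro ⟨x, y⟩ hp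
    have hx : x ∈ U := hp.1
    have hy : y ≠ 0 := hp.2
    have hψ : HasDerivAt (fun t : ℝ => ((x, t • y) : (Fin n → ℝ) × (Fin n → ℝ)))
        (((0 : Fin n → ℝ), y)) 1 := by
      have h2 : HasDerivAt (fun t : ℝ => t • y) y 1 := by
        simpa using (hasDerivAt_id (1:ℝ)).smul_const y
      exact (hasDerivAt_const (1:ℝ) x).prodMk h2
    have h1y : ((x, (1:ℝ) • y) : (Fin n → ℝ) × (Fin n → ℝ)) = (x, y) := by simp
    have hcomp : HasDerivAt (fun t : ℝ => Fh (x, t • y)) (g (x, y) ((0 : Fin n → ℝ), y)) 1 := by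
      have hF1 : HasFDerivAt Fh (g (x, y)) ((x, (1:ℝ) • y)) := by
        rw [h1y]; exact (hdF (x, y) (hmem x hx y hy)).hasFDerivAt
      exact hF1.comp_hasDerivAt 1 hψ
    have hev2 : (fun t : ℝ => Fh (x, t • y)) =ᶠ[nhds (1:ℝ)] fun t => t * F x y := by
      filter_upwards [eventually_gt_nhds (zero_lt_one)] with t ht
      exact hFhom x hx y t ht
    have hd2 : HasDerivAt (fun t : ℝ => Fh (x, t • y)) (F x y) 1 := by
      have h := (hasDerivAt_id (1:ℝ)).mul_const (F x y)
      simpa using h.congr_of_eventuallyEq hev2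
    simpa using hcomp.unique hd2
  -- derivative of the Euler identity in arbitrary directions
  have hC : ∀ p ∈ Ω, ∀ v : (Fin n → ℝ) × (Fin n → ℝ),
      g p ((0 : Fin n → ℝ), v.2) + H p v ((0 : Fin n → ℝ), p.2) = g p v := by
    intro p hp v
    have hL0 : HasFDerivAt (fun q : (Fin n → ℝ) × (Fin n → ℝ) => (((0 : Fin n → ℝ), q.2) : (Fin n → ℝ) × (Fin n → ℝ)))
        ((0 : ((Fin n → ℝ) × (Fin n → ℝ)) →L[ℝ] (Fin n → ℝ)).prod
          (ContinuousLinearMap.snd ℝ (Fin n → ℝ) (Fin n → ℝ))) p :=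
      ((0 : ((Fin n → ℝ) × (Fin n → ℝ)) →L[ℝ] (Fin n → ℝ)).prod
          (ContinuousLinearMap.snd ℝ (Fin n → ℝ) (Fin n → ℝ))).hasFDerivAt
    have hΨ : HasFDerivAt (fun q : (Fin n → ℝ) × (Fin n → ℝ) => g q ((0 : Fin n → ℝ), q.2))
        ((g p).comp ((0 : ((Fin n → ℝ) × (Fin n → ℝ)) →L[ℝ] (Fin n → ℝ)).prod
          (ContinuousLinearMap.snd ℝ (Fin n → ℝ) (Fin n → ℝ)))
          + (H p).flip ((0 : Fin n → ℝ), p.2)) p :=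
      (hdg p hp).hasFDerivAt.clm_apply hL0
    have hev : (fun q : (Fin n → ℝ) × (Fin n → ℝ) => g q ((0 : Fin n → ℝ), q.2)) =ᶠ[nhds p] Fh := by
      filter_upwards [hΩo.mem_nhds hp] with q hq
      exact hEuler q hq
    have h1 : fderiv ℝ (fun q : (Fin n → ℝ) × (Fin n → ℝ) => g q ((0 : Fin n → ℝ), q.2)) p = g p :=
      hev.fderiv_eq
    rw [hΨ.fderiv] at h1
    have h2 := congrArg (fun (L : ((Fin n → ℝ) × (Fin n → ℝ)) →L[ℝ] ℝ) => L v) h1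
    simpa using h2
  -- symmetry of the second derivative
  have hD : ∀ p ∈ Ω, ∀ v w : (Fin n → ℝ) × (Fin n → ℝ), H p v w = H p w v := by
    intro p hp v w
    exact (hsm p hp).isSymmSndFDerivAt (by simpa using htwo) v w
  -- symmetry of the third derivative in the outer two arguments
  have hTsym : ∀ p ∈ Ω, ∀ u v : (Fin n → ℝ) × (Fin n → ℝ), T p u v = T p v u := by
    intro p hp u v
    refine second_derivative_symmetric_of_eventually (f := g) (f' := H) (x := p) ?_ ?_ u v
    · filter_upwards [hΩo.mem_nhds hp] with q hq
      exact (hdg q hq).hasFDerivAt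
    · exact (hdH p hp).hasFDerivAt
  -- symmetry of the third derivative in the inner two arguments
  have hTin : ∀ p ∈ Ω, ∀ u v w : (Fin n → ℝ) × (Fin n → ℝ), T p u v w = T p u w v := by
    intro p hp u v w
    have D1 : HasFDerivAt (fun q : (Fin n → ℝ) × (Fin n → ℝ) => H q v w)
        (((ContinuousLinearMap.apply ℝ ℝ w).comp
          (ContinuousLinearMap.apply ℝ (((Fin n → ℝ) × (Fin n → ℝ)) →L[ℝ] ℝ) v)).comp (T p)) p := by
      have h := ((hdH p hp).hasFDerivAt.clm_apply (hasFDerivAt_const v p)).clm_apply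
        (hasFDerivAt_const w p)
      refine h.congr_fderiv (ContinuousLinearMap.ext fun u => ?_)
      simp [hTdef]
    have D2 : HasFDerivAt (fun q : (Fin n → ℝ) × (Fin n → ℝ) => H q w v)
        (((ContinuousLinearMap.apply ℝ ℝ v).comp
          (ContinuousLinearMap.apply ℝ (((Fin n → ℝ) × (Fin n → ℝ)) →L[ℝ] ℝ) w)).comp (T p)) p := by
      have h := ((hdH p hp).hasFDerivAt.clm_apply (hasFDerivAt_const w p)).clm_apply
        (hasFDerivAt_const v p)
      refine h.congr_fderiv (ContinuousLinearMap.ext fun u => ?_)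
      simp [hTdef]
    have hev : (fun q : (Fin n → ℝ) × (Fin n → ℝ) => H q v w)
        =ᶠ[nhds p] (fun q : (Fin n → ℝ) × (Fin n → ℝ) => H q w v) := by
      filter_upwards [hΩo.mem_nhds hp] with q hq
      exact hD q hq v w
    have h1 : fderiv ℝ (fun q : (Fin n → ℝ) × (Fin n → ℝ) => H q v w) p
        = fderiv ℝ (fun q : (Fin n → ℝ) × (Fin n → ℝ) => H q w v) p := hev.fderiv_eq
    rw [D1.fderiv, D2.fderiv] at h1
    have h2 := congrArg (fun (L : ((Fin n → ℝ) × (Fin n → ℝ)) →L[ℝ] ℝ) => L u) h1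
    simpa using h2
  constructor
  · -- Rapcsák ⇒ Hamel
    intro hR x hx y hy k l
    have hp : ((x, y) : (Fin n → ℝ) × (Fin n → ℝ)) ∈ Ω := hmem x hx y hy
    -- joint form of the Rapcsák equation
    have hRj : ∀ p ∈ Ω, ∀ l : Fin n,
        H p ((p.2, (0 : Fin n → ℝ))) ((0 : Fin n → ℝ), Pi.single l 1)
          = g p (Pi.single l 1, 0) := by
      rintro ⟨x', y'⟩ hp' l'
      have hx' : x' ∈ U := hp'.1
      have hy' : y' ≠ 0 := hp'.2
      have h0 := hR x' hx' y' hy' l'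
      rw [hA1 x' hx' y' hy' l'] at h0
      have hsum : ∑ k', pd (fun x'' => pd (F x'') l' y') k' x' * y' k'
          = ∑ k', y' k' * H (x', y') (Pi.single k' 1, 0) ((0 : Fin n → ℝ), Pi.single l' 1) := by
        refine Finset.sum_congr rfl fun k' _ => ?_
        rw [hA3 x' hx' y' hy' k' l', mul_comm]
      rw [hsum] at h0
      have hlin : H (x', y') ((y', (0 : Fin n → ℝ))) ((0 : Fin n → ℝ), Pi.single l' 1)
          = ∑ k', y' k' * H (x', y') (Pi.single k' 1, 0) ((0 : Fin n → ℝ), Pi.single l' 1) := by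
        have h3 := clm_fst_sum
          ((ContinuousLinearMap.apply ℝ ℝ ((0 : Fin n → ℝ), Pi.single l' 1)).comp (H (x', y'))) y'
        simpa using h3
      rw [hlin]
      exact h0
    -- differentiate the joint Rapcsák equation in the direction (0, eₘ)
    have hstar : ∀ l' m' : Fin n,
        H (x, y) (Pi.single m' 1, 0) ((0 : Fin n → ℝ), Pi.single l' 1)
          + T (x, y) ((0 : Fin n → ℝ), Pi.single m' 1) ((y, (0 : Fin n → ℝ)))
              ((0 : Fin n → ℝ), Pi.single l' 1)
          = H (x, y) (Pi.single l' 1, 0) ((0 : Fin n → ℝ), Pi.single m' 1) := by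
      intro l' m'
      set c : (((Fin n → ℝ) × (Fin n → ℝ)) →L[ℝ] ((Fin n → ℝ) × (Fin n → ℝ)) →L[ℝ] ℝ)
          →L[ℝ] ((Fin n → ℝ) × (Fin n → ℝ)) →L[ℝ] ℝ :=
        ContinuousLinearMap.compL ℝ ((Fin n → ℝ) × (Fin n → ℝ))
          (((Fin n → ℝ) × (Fin n → ℝ)) →L[ℝ] ℝ) ℝ
          (ContinuousLinearMap.apply ℝ ℝ ((0 : Fin n → ℝ), Pi.single l' 1)) with hcdef
    -- derivative of q ↦ (apply (0,e_l)) ∘ H q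
      have hM : HasFDerivAt (fun q : (Fin n → ℝ) × (Fin n → ℝ) => c (H q)) (c.comp (T (x, y))) (x, y) := by
        have h := (hasFDerivAt_const (ContinuousLinearMap.apply ℝ ℝ
          (((0 : Fin n → ℝ), Pi.single l' 1) : (Fin n → ℝ) × (Fin n → ℝ))) (x, y)).clm_comp
          (hdH _ hp).hasFDerivAt
        refine h.congr_fderiv (ContinuousLinearMap.ext fun u => ContinuousLinearMap.ext fun w => ?_)
        simp [hcdef, hTdef]
      have hL2 : HasFDerivAt (fun q : (Fin n → ℝ) × (Fin n → ℝ) => ((q.2, (0 : Fin n → ℝ)) : (Fin n → ℝ) × (Fin n → ℝ)))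
          ((ContinuousLinearMap.snd ℝ (Fin n → ℝ) (Fin n → ℝ)).prod 0) (x, y) :=
        ((ContinuousLinearMap.snd ℝ (Fin n → ℝ) (Fin n → ℝ)).prod
          (0 : ((Fin n → ℝ) × (Fin n → ℝ)) →L[ℝ] (Fin n → ℝ))).hasFDerivAt
      have hΦ₁ : HasFDerivAt (fun q : (Fin n → ℝ) × (Fin n → ℝ) => (c (H q)) ((q.2, (0 : Fin n → ℝ))))
          ((c (H (x, y))).comp ((ContinuousLinearMap.snd ℝ (Fin n → ℝ) (Fin n → ℝ)).prod 0)
            + (c.comp (T (x, y))).flip ((y, (0 : Fin n → ℝ)))) (x, y) :=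
        hM.clm_apply hL2
      have hΦ₂ : HasFDerivAt (fun q : (Fin n → ℝ) × (Fin n → ℝ) => g q (Pi.single l' 1, 0))
          ((ContinuousLinearMap.apply ℝ ℝ ((Pi.single l' 1 : Fin n → ℝ), (0 : Fin n → ℝ))).comp (H (x, y))) (x, y) := by
        exact (ContinuousLinearMap.apply ℝ ℝ (((Pi.single l' 1 : Fin n → ℝ), (0 : Fin n → ℝ)) : (Fin n → ℝ) × (Fin n → ℝ))).hasFDerivAt.comp
          (x, y) (hdg _ hp).hasFDerivAt
      have hev : (fun q : (Fin n → ℝ) × (Fin n → ℝ) => (c (H q)) ((q.2, (0 : Fin n → ℝ))))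
          =ᶠ[nhds ((x, y) : (Fin n → ℝ) × (Fin n → ℝ))]
            (fun q : (Fin n → ℝ) × (Fin n → ℝ) => g q (Pi.single l' 1, 0)) := by
        filter_upwards [hΩo.mem_nhds hp] with q hq
        have := hRj q hq l'
        simpa [hcdef] using this
      have h1 : fderiv ℝ (fun q : (Fin n → ℝ) × (Fin n → ℝ) => (c (H q)) ((q.2, (0 : Fin n → ℝ)))) (x, y)
          = fderiv ℝ (fun q : (Fin n → ℝ) × (Fin n → ℝ) => g q (Pi.single l' 1, 0)) (x, y) := hev.fderiv_eq
      rw [hΦ₁.fderiv, hΦ₂.fderiv] at h1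
      have h2 := congrArg (fun (L : ((Fin n → ℝ) × (Fin n → ℝ)) →L[ℝ] ℝ) =>
        L ((0 : Fin n → ℝ), Pi.single m' 1)) h1
      simp only [ContinuousLinearMap.add_apply, ContinuousLinearMap.coe_comp',
        Function.comp_apply, ContinuousLinearMap.flip_apply, ContinuousLinearMap.prod_apply,
        ContinuousLinearMap.coe_snd', ContinuousLinearMap.zero_apply, hcdef,
        ContinuousLinearMap.compL_apply, ContinuousLinearMap.apply_apply] at h2
      -- h2 : H (x,y) (e_m, 0) (0, e_l) + T (x,y) (0,e_m) (y,0) (0,e_l) = H (x,y) (0,e_m) (e_l,0)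
      rw [hD (x, y) hp ((0 : Fin n → ℝ), Pi.single m' 1) ((Pi.single l' 1 : Fin n → ℝ), 0)] at h2
      exact h2
    -- combine the two instances of hstar using symmetry of the third derivative
    have hS : T (x, y) ((0 : Fin n → ℝ), Pi.single k 1) ((y, (0 : Fin n → ℝ)))
          ((0 : Fin n → ℝ), Pi.single l 1)
        = T (x, y) ((0 : Fin n → ℝ), Pi.single l 1) ((y, (0 : Fin n → ℝ)))
          ((0 : Fin n → ℝ), Pi.single k 1) := by
      have e1 := congrArg (fun (L : ((Fin n → ℝ) × (Fin n → ℝ)) →L[ℝ] ℝ) =>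
        L ((0 : Fin n → ℝ), Pi.single l 1))
        (hTsym (x, y) hp ((0 : Fin n → ℝ), Pi.single k 1) ((y, (0 : Fin n → ℝ))))
      have e2 := hTin (x, y) hp ((y, (0 : Fin n → ℝ)))
        ((0 : Fin n → ℝ), Pi.single k 1) ((0 : Fin n → ℝ), Pi.single l 1)
      have e3 := congrArg (fun (L : ((Fin n → ℝ) × (Fin n → ℝ)) →L[ℝ] ℝ) =>
        L ((0 : Fin n → ℝ), Pi.single k 1))
        (hTsym (x, y) hp ((y, (0 : Fin n → ℝ))) ((0 : Fin n → ℝ), Pi.single l 1))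
      rw [e1, e2, e3]
    have h1 := hstar l k
    have h2 := hstar k l
    rw [hS] at h1
    rw [hA3 x hx y hy k l, hA3 x hx y hy l k]
    linarith
  · -- Hamel ⇒ Rapcsák
    intro hH x hx y hy l
    have hp : ((x, y) : (Fin n → ℝ) × (Fin n → ℝ)) ∈ Ω := hmem x hx y hy
    have step1 : ∑ k, pd (fun x' => pd (F x') l y) k x * y k
        = ∑ k, y k * H (x, y) (Pi.single l 1, 0) ((0 : Fin n → ℝ), Pi.single k 1) := by
      refine Finset.sum_congr rfl fun k _ => ?_
      have h1 := hH x hx y hy k l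
      rw [hA3 x hx y hy k l, hA3 x hx y hy l k] at h1
      rw [hA3 x hx y hy k l, h1, mul_comm]
    have step2 : H (x, y) ((Pi.single l 1 : Fin n → ℝ), 0) ((0 : Fin n → ℝ), y)
        = ∑ k, y k * H (x, y) (Pi.single l 1, 0) ((0 : Fin n → ℝ), Pi.single k 1) :=
      clm_snd_sum (H (x, y) ((Pi.single l 1 : Fin n → ℝ), 0)) y
    have step3 : H (x, y) ((Pi.single l 1 : Fin n → ℝ), 0) ((0 : Fin n → ℝ), y)
        = g (x, y) ((Pi.single l 1 : Fin n → ℝ), 0) := by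
      have h3 := hC (x, y) hp ((Pi.single l 1 : Fin n → ℝ), 0)
      simpa [Prod.mk_zero_zero] using h3
    rw [step1, ← step2, step3, hA1 x hx y hy l]
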